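/- Let A: S^d → R^m satisfy the restricted isometry property of order r+2 with constant δ, and let w ∈ R^d be a unit vector. Define the projection P_⊥(Z) = Z − ⟨ww^T, Z⟩ ww^T. Then for every symmetric matrix Z of rank at most r, |⟨A(ww^T), A(P_⊥(Z))⟩| ≤ δ ‖Z‖_F. -/

import Mathlib

open scoped BigOperators
open Matrix

noncomputable def frobNorm {d₁ d₂ : ℕ} (A : Matrix (Fin d₁) (Fin d₂) ℝ) : ℝ :=
  Real.sqrt (∑ i, ∑ j, A i j ^ 2)

noncomputable def vecNorm {m : ℕ} (y : Fin m → ℝ) : ℝ :=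
  Real.sqrt (∑ i, y i ^ 2)

noncomputable def specNorm {d₁ d₂ : ℕ} (A : Matrix (Fin d₁) (Fin d₂) ℝ) : ℝ :=
  ‖LinearMap.toContinuousLinearMap (Matrix.toEuclideanLin A)‖

noncomputable def tinner {d : ℕ} (A B : Matrix (Fin d) (Fin d) ℝ) : ℝ :=
  (A * Bᵀ).trace

noncomputable def sigmaMin {d₁ d₂ : ℕ} (A : Matrix (Fin d₁) (Fin d₂) ℝ) : ℝ :=
  sInf {s : ℝ | 0 < s ∧ ∃ i, s ^ 2 = (Matrix.isHermitian_conjTranspose_mul_self A).eigenvalues i}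

noncomputable def projPerp {d : ℕ} (w : Fin d → ℝ) (Z : Matrix (Fin d) (Fin d) ℝ) :
    Matrix (Fin d) (Fin d) ℝ :=
  Z - tinner (Matrix.vecMulVec w w) Z • Matrix.vecMulVec w w

/- ### auxiliary material -/

namespace RipAux

variable {d : ℕ}

noncomputable def ip (A B : Matrix (Fin d) (Fin d) ℝ) : ℝ := ∑ i, ∑ j, A i j * B i j

lemma tinner_eq_ip (A B : Matrix (Fin d) (Fin d) ℝ) : tinner A B = ip A B := by
  simp [tinner, ip, Matrix.trace, Matrix.diag, Matrix.mul_apply]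

lemma ip_comm (A B : Matrix (Fin d) (Fin d) ℝ) : ip A B = ip B A := by
  simp [ip, mul_comm]

lemma ip_nonneg (A : Matrix (Fin d) (Fin d) ℝ) : 0 ≤ ip A A := by
  apply Finset.sum_nonneg; intro i _
  exact Finset.sum_nonneg fun j _ => mul_self_nonneg _

lemma frob_sq (A : Matrix (Fin d) (Fin d) ℝ) : frobNorm A ^ 2 = ip A A := by
  have h : (∑ i, ∑ j, A i j ^ 2) = ip A A := by
    simp [ip, sq]
  rw [frobNorm, h, Real.sq_sqrt (ip_nonneg A)]

lemma frob_nonneg (A : Matrix (Fin d) (Fin d) ℝ) : 0 ≤ frobNorm A :=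
  Real.sqrt_nonneg _

lemma ip_sub_right (A B C : Matrix (Fin d) (Fin d) ℝ) : ip A (B - C) = ip A B - ip A C := by
  simp [ip, Matrix.sub_apply, mul_sub, Finset.sum_sub_distrib]

lemma ip_smul_right (A B : Matrix (Fin d) (Fin d) ℝ) (c : ℝ) : ip A (c • B) = c * ip A B := by
  simp [ip, Matrix.smul_apply, Finset.mul_sum, mul_left_comm]

lemma ip_expand (A B : Matrix (Fin d) (Fin d) ℝ) (a : ℝ) :
    ip (A + a • B) (A + a • B) = ip A A + 2 * a * ip A B + a ^ 2 * ip B B := by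
  simp only [ip, Matrix.add_apply, Matrix.smul_apply, smul_eq_mul, Finset.mul_sum]
  rw [← Finset.sum_add_distrib, ← Finset.sum_add_distrib]
  apply Finset.sum_congr rfl
  intro i _
  rw [← Finset.sum_add_distrib, ← Finset.sum_add_distrib]
  apply Finset.sum_congr rfl
  intro j _
  ring

lemma rank_add_le (A B : Matrix (Fin d) (Fin d) ℝ) : (A + B).rank ≤ A.rank + B.rank := by
  unfold Matrix.rank
  have hle : LinearMap.range (A + B).mulVecLin ≤
      LinearMap.range A.mulVecLin ⊔ LinearMap.range B.mulVecLin := by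
    rintro x ⟨v, rfl⟩
    exact Submodule.mem_sup.2 ⟨A.mulVecLin v, ⟨v, rfl⟩, B.mulVecLin v, ⟨v, rfl⟩, by
      simp [Matrix.mulVecLin_apply, Matrix.add_mulVec]⟩
  exact le_trans (Submodule.finrank_mono hle)
    (Submodule.finrank_add_le_finrank_add_finrank _ _)

lemma rank_smul_le (A : Matrix (Fin d) (Fin d) ℝ) (c : ℝ) : (c • A).rank ≤ A.rank := by
  unfold Matrix.rank
  apply Submodule.finrank_mono
  rintro x ⟨v, rfl⟩
  exact ⟨c • v, by simp [Matrix.mulVecLin_apply, Matrix.mulVec_smul, Matrix.smul_mulVec]⟩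

lemma rank_vecMulVec_le (u v : Fin d → ℝ) : (Matrix.vecMulVec u v).rank ≤ 1 := by
  unfold Matrix.rank
  have hle : LinearMap.range (Matrix.vecMulVec u v).mulVecLin ≤ Submodule.span ℝ {u} := by
    rintro x ⟨y, rfl⟩
    have : (Matrix.vecMulVec u v).mulVecLin y = (∑ j, v j * y j) • u := by
      funext i
      simp only [Matrix.mulVecLin_apply, Matrix.mulVec, Matrix.vecMulVec_apply, dotProduct,
        Pi.smul_apply, smul_eq_mul, Finset.sum_mul]
      exact Finset.sum_congr rfl fun j _ => by ring
    rw [this]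
    exact Submodule.smul_mem _ _ (Submodule.mem_span_singleton_self u)
  refine le_trans (Submodule.finrank_mono hle) ?_
  by_cases hu : u = 0
  · rw [hu, Submodule.span_zero_singleton]
    simp
  · rw [finrank_span_singleton hu]

end RipAux

open RipAux

theorem statement3 {d m r : ℕ} (δ : ℝ) (hδ : 0 ≤ δ)
    (𝒜 : Matrix (Fin d) (Fin d) ℝ →ₗ[ℝ] (Fin m → ℝ))
    (hRIP : ∀ Z : Matrix (Fin d) (Fin d) ℝ, Z.IsSymm → Z.rank ≤ r + 2 →
      (1 - δ) * frobNorm Z ^ 2 ≤ ∑ i, 𝒜 Z i ^ 2 ∧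
        ∑ i, 𝒜 Z i ^ 2 ≤ (1 + δ) * frobNorm Z ^ 2)
    (w : Fin d → ℝ) (hw : ∑ i, w i ^ 2 = 1)
    (Z : Matrix (Fin d) (Fin d) ℝ) (hZ : Z.IsSymm) (hr : Z.rank ≤ r) :
    |∑ i, 𝒜 (Matrix.vecMulVec w w) i * 𝒜 (projPerp w Z) i| ≤ δ * frobNorm Z := by
  set X : Matrix (Fin d) (Fin d) ℝ := Matrix.vecMulVec w w with hX
  set c : ℝ := tinner X Z with hc
  set Y : Matrix (Fin d) (Fin d) ℝ := projPerp w Z with hYdef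
  have hY : Y = Z - c • X := rfl
  -- basic facts
  have hXX : ip X X = 1 := by
    have : ip X X = (∑ i, w i ^ 2) * (∑ j, w j ^ 2) := by
      rw [ip, Finset.sum_mul_sum]
      apply Finset.sum_congr rfl; intro i _
      apply Finset.sum_congr rfl; intro j _
      simp [hX, Matrix.vecMulVec_apply]; ring
    rw [this, hw, one_mul]
  have hXZ : ip X Z = c := (tinner_eq_ip X Z).symm
  have hXY : ip X Y = 0 := by
    rw [hY, ip_sub_right, ip_smul_right, hXZ, hXX, mul_one, sub_self]
  have hYY : ip Y Y = ip Z Z - c ^ 2 := by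
    have h1 : Y = Z + (-c) • X := by rw [hY]; module
    rw [h1, ip_expand, hXX, ← hXZ]
    ring_nf
    rw [ip_comm Z X, hXZ]
    ring
  have hfrobY : frobNorm Y ≤ frobNorm Z := by
    rw [show frobNorm Y = Real.sqrt (ip Y Y) by
          rw [frobNorm]; congr 1; simp [ip, sq],
        show frobNorm Z = Real.sqrt (ip Z Z) by
          rw [frobNorm]; congr 1; simp [ip, sq]]
    apply Real.sqrt_le_sqrt
    nlinarith [hYY, sq_nonneg c]
  by_cases hN0 : frobNorm Y = 0
  · -- then Y = 0 and the LHS vanishes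
    have hipY : ip Y Y = 0 := by
      have := frob_sq Y
      rw [hN0] at this; simpa using this.symm
    have hY0 : Y = 0 := by
      ext i j
      have h1 : ∀ i ∈ Finset.univ, (0:ℝ) ≤ ∑ j, Y i j * Y i j :=
        fun i _ => Finset.sum_nonneg fun j _ => mul_self_nonneg _
      have h2 := (Finset.sum_eq_zero_iff_of_nonneg h1).1 hipY i (Finset.mem_univ i)
      have h3 : ∀ j ∈ Finset.univ, (0:ℝ) ≤ Y i j * Y i j :=
        fun j _ => mul_self_nonneg _
      have h4 := (Finset.sum_eq_zero_iff_of_nonneg h3).1 h2 j (Finset.mem_univ j)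
      have := mul_self_eq_zero.1 h4
      simpa using this
    rw [hY0]
    simp only [map_zero, Pi.zero_apply, mul_zero, Finset.sum_const_zero, abs_zero]
    exact mul_nonneg hδ (frob_nonneg Z)
  · have hN : 0 < frobNorm Y := lt_of_le_of_ne (frob_nonneg Y) (Ne.symm hN0)
    set N : ℝ := frobNorm Y with hNdef
    set t : ℝ := N⁻¹ with htdef
    have ht : 0 < t := inv_pos.2 hN
    set Y' : Matrix (Fin d) (Fin d) ℝ := t • Y with hY'def
    have hipYN : ip Y Y = N ^ 2 := (frob_sq Y).symm
    -- symmetry facts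
    have hXsymm : Xᵀ = X := by
      ext i j
      simp [hX, Matrix.transpose_apply, Matrix.vecMulVec_apply, mul_comm]
    have hYsymm : Yᵀ = Y := by
      rw [hY, Matrix.transpose_sub, Matrix.transpose_smul, hZ, hXsymm]
    have hPsymm : (X + Y').IsSymm := by
      show (X + Y')ᵀ = X + Y'
      rw [Matrix.transpose_add, hXsymm, hY'def, Matrix.transpose_smul, hYsymm]
    have hMsymm : (X - Y').IsSymm := by
      show (X - Y')ᵀ = X - Y'
      rw [Matrix.transpose_sub, hXsymm, hY'def, Matrix.transpose_smul, hYsymm]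
    -- rank facts
    have hXrank : ∀ a : ℝ, (a • X).rank ≤ 1 :=
      fun a => le_trans (rank_smul_le X a) (RipAux.rank_vecMulVec_le w w)
    have hZrank : ∀ a : ℝ, (a • Z).rank ≤ r :=
      fun a => le_trans (rank_smul_le Z a) hr
    have hPrank : (X + Y').rank ≤ r + 2 := by
      have hrepr : X + Y' = (1 - t * c) • X + t • Z := by
        rw [hY'def, hY]; module
      rw [hrepr]
      calc ((1 - t * c) • X + t • Z).rank ≤ ((1 - t*c) • X).rank + (t • Z).rank :=
            rank_add_le _ _
        _ ≤ 1 + r := add_le_add (hXrank _) (hZrank _)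
        _ ≤ r + 2 := by omega
    have hMrank : (X - Y').rank ≤ r + 2 := by
      have hrepr : X - Y' = (1 + t * c) • X + (-t) • Z := by
        rw [hY'def, hY]; module
      rw [hrepr]
      calc ((1 + t * c) • X + (-t) • Z).rank ≤ ((1 + t*c) • X).rank + ((-t) • Z).rank :=
            rank_add_le _ _
        _ ≤ 1 + r := add_le_add (hXrank _) (hZrank _)
        _ ≤ r + 2 := by omega
    -- Frobenius norms of X ± Y'
    have ht2 : t ^ 2 * N ^ 2 = 1 := by
      rw [htdef]; field_simp
    have hfP : frobNorm (X + Y') ^ 2 = 2 := by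
      rw [frob_sq, hY'def, ip_expand, hXX, hXY, hipYN]
      nlinarith [ht2]
    have hfM : frobNorm (X - Y') ^ 2 = 2 := by
      have : X - Y' = X + (-t) • Y := by rw [hY'def]; module
      rw [this, frob_sq, ip_expand, hXX, hXY, hipYN]
      nlinarith [ht2]
    -- apply RIP
    obtain ⟨hP1, hP2⟩ := hRIP (X + Y') hPsymm hPrank
    obtain ⟨hM1, hM2⟩ := hRIP (X - Y') hMsymm hMrank
    rw [hfP] at hP1 hP2
    rw [hfM] at hM1 hM2
    -- polarization
    have hsumP : ∑ i, 𝒜 (X + Y') i ^ 2 = ∑ i, (𝒜 X i + 𝒜 Y' i) ^ 2 := by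
      apply Finset.sum_congr rfl; intro i _; rw [map_add]; rfl
    have hsumM : ∑ i, 𝒜 (X - Y') i ^ 2 = ∑ i, (𝒜 X i - 𝒜 Y' i) ^ 2 := by
      apply Finset.sum_congr rfl; intro i _; rw [map_sub]; rfl
    rw [hsumP] at hP1 hP2
    rw [hsumM] at hM1 hM2
    have hpol : ∑ i, 𝒜 X i * 𝒜 Y' i =
        ((∑ i, (𝒜 X i + 𝒜 Y' i) ^ 2) - ∑ i, (𝒜 X i - 𝒜 Y' i) ^ 2) / 4 := by
      rw [← Finset.sum_sub_distrib, Finset.sum_div]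
      apply Finset.sum_congr rfl; intro i _; ring
    have hcore : |∑ i, 𝒜 X i * 𝒜 Y' i| ≤ δ := by
      rw [hpol, abs_le]
      constructor <;> [linarith; linarith]
    -- rescale
    have hYN : N • Y' = Y := by
      rw [hY'def, smul_smul, htdef, mul_inv_cancel₀ (ne_of_gt hN), one_smul]
    have hfin : ∑ i, 𝒜 X i * 𝒜 Y i = N * ∑ i, 𝒜 X i * 𝒜 Y' i := by
      rw [← hYN, _root_.map_smul, Finset.mul_sum]
      apply Finset.sum_congr rfl; intro i _
      show 𝒜 X i * (N • 𝒜 Y') i = N * (𝒜 X i * 𝒜 Y' i)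
      simp [Pi.smul_apply, smul_eq_mul]; ring
    rw [hfin, abs_mul, abs_of_pos hN]
    calc N * |∑ i, 𝒜 X i * 𝒜 Y' i| ≤ N * δ := by
          exact mul_le_mul_of_nonneg_left hcore (le_of_lt hN)
      _ ≤ frobNorm Z * δ := mul_le_mul_of_nonneg_right hfrobY hδ
      _ = δ * frobNorm Z := mul_comm _ _
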